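/- Let A and B be unital complex *-algebras with A prime and having a nontrivial projection, and let η, ν be nonzero complex numbers with η ≠ −1 and ν ≠ −1. Then every bijective map Φ : A → B preserving the mixed product a ■_η b ∘_ν c, i.e., satisfying Φ((a*b + η ba*)c + ν c(a*b + η ba*)) = (Φ(a)*Φ(b) + η Φ(b)Φ(a)*)Φ(c) + ν Φ(c)(Φ(a)*Φ(b) + η Φ(b)Φ(a)*) for all a, b, c ∈ A, is additive. Moreover, if B is prime and Φ(1_A) is a projection of B, then Φ is either a *-ring isomorphism or a *-ring anti-isomorphism. -/
import Mathlib
set_option linter.unusedSectionVars false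
set_option maxHeartbeats 1000000

namespace Stmt16

variable {A B : Type*} [Ring A] [Algebra ℂ A] [StarRing A]
    [Ring B] [Algebra ℂ B] [StarRing B]

def mx (η ν : ℂ) (a b c : A) : A :=
  (star a * b + η • (b * star a)) * c + ν • (c * (star a * b + η • (b * star a)))

theorem mx_add3 (η ν : ℂ) (a b c c' : A) :
    mx η ν a b (c + c') = mx η ν a b c + mx η ν a b c' := by
  simp only [mx, mul_add, add_mul, smul_add]; abel

theorem mx_add2 (η ν : ℂ) (a b b' c : A) :
    mx η ν a (b + b') c = mx η ν a b c + mx η ν a b' c := by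
  simp only [mx, mul_add, add_mul, smul_add]; abel

theorem smul_cancel {c : ℂ} (hc : c ≠ 0) {x y : A} (h : c • x = c • y) : x = y := by
  have := congrArg (c⁻¹ • ·) h
  simpa [smul_smul, inv_mul_cancel₀ hc] using this

theorem smul_cancel0 {c : ℂ} (hc : c ≠ 0) {x : A} (h : c • x = 0) : x = 0 :=
  smul_cancel hc (by rw [h, smul_zero])

theorem massoc {x y w : A} (h : x * y = w) (z : A) : x * (y * z) = w * z := by
  rw [← mul_assoc, h]

section core

variable (Φ : A → B) (η ν : ℂ)
variable (hbij : Function.Bijective Φ)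
variable (hΦ : ∀ a b c : A, Φ (mx η ν a b c) = mx η ν (Φ a) (Φ b) (Φ c))

include hbij hΦ in
theorem phi_zero : Φ 0 = 0 := by
  obtain ⟨c, hc⟩ := hbij.surjective 0
  have h := hΦ 0 0 c
  simp only [mx, star_zero, zero_mul, mul_zero, smul_zero, add_zero, zero_add, hc] at h
  exact h

include hbij hΦ in
theorem inject3 (a b T : A) (hT : Φ T = Φ a + Φ b) (x u : A)
    (hsum : Φ (mx η ν x u a) + Φ (mx η ν x u b) = Φ (mx η ν x u a + mx η ν x u b)) :
    mx η ν x u T = mx η ν x u a + mx η ν x u b := by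
  apply hbij.injective
  rw [hΦ, hT, ← hsum, hΦ, hΦ, mx_add3]

end core

theorem mx_proj (η ν : ℂ) (p : A) (hsp : star p = p) (hpp : p * p = p) (c : A) :
    mx η ν p p c = (1+η) • (p * c + ν • (c * p)) := by
  simp only [mx, hsp, hpp, add_mul, mul_add, smul_add, smul_mul_assoc, mul_smul_comm]
  module

theorem mx_tau (η ν : ℂ) (e f : A) (hse : star e = e) (hee : e * e = e) (hfe : f * e = 0)
    (t c : A) : mx η ν e (e*t*f) c = (e*t*f) * c + ν • (c * (e*t*f)) := by
  have h1 : e * (e*t*f) = e*t*f := by rw [← mul_assoc, ← mul_assoc, hee]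
  have h2 : e*t*f*e = 0 := by rw [mul_assoc, hfe, mul_zero]
  simp only [mx, hse, h1, h2, smul_zero, add_zero]

section peirce

variable (Φ : A → B) (η ν : ℂ)
variable (hbij : Function.Bijective Φ)
variable (hΦ : ∀ a b c : A, Φ (mx η ν a b c) = mx η ν (Φ a) (Φ b) (Φ c))
variable (hη1 : 1 + η ≠ 0) (hν1 : 1 + ν ≠ 0) (hν0 : ν ≠ 0)
variable (hprime : ∀ x y : A, (∀ t : A, x * t * y = 0) → x = 0 ∨ y = 0)
variable (e f : A) (hse : star e = e) (hsf : star f = f)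
variable (hee : e*e = e) (hff : f*f = f) (hef : e*f = 0) (hfe : f*e = 0)
variable (hefo : e + f = 1) (he0 : e ≠ 0) (hf0 : f ≠ 0)

include hbij hΦ hη1 hν1 hν0 hprime hse hsf hee hff hef hfe hefo he0 hf0 in
/-- additivity on pairs A₁₁ × A₁₂ -/
theorem L1 (a b : A) (hea : e*a = a) (hae : a*e = a) (heb : e*b = b) (hbf : b*f = b) :
    Φ (a+b) = Φ a + Φ b := by
  obtain ⟨T, hT⟩ := hbij.surjective (Φ a + Φ b)
  have haf : a*f = 0 := by rw [← hae, mul_assoc, hef, mul_zero]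
  have hfa : f*a = 0 := by rw [← hea, ← mul_assoc, hfe, zero_mul]
  have hbe : b*e = 0 := by rw [← hbf, mul_assoc, hfe, mul_zero]
  have hfb : f*b = 0 := by rw [← heb, ← mul_assoc, hfe, zero_mul]
  -- test (f,f)
  have hffa : mx η ν f f a = 0 := by
    rw [mx_proj η ν f hsf hff, hfa, haf, smul_zero, add_zero, smul_zero]
  have hffb : mx η ν f f b = ((1+η)*ν) • b := by
    rw [mx_proj η ν f hsf hff, hfb, hbf, zero_add, smul_smul]
  have h1 := inject3 Φ η ν hbij hΦ a b T hT f f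
    (by rw [hffa, hffb, phi_zero Φ η ν hbij hΦ, zero_add, zero_add])
  rw [hffa, hffb, zero_add, mx_proj η ν f hsf hff] at h1
  have h1' : f*T + ν•(T*f) = ν • b := by
    apply smul_cancel hη1; rw [h1, smul_smul]
  have hETf : e*(T*f) = b := by
    have h := congrArg (fun z => e * z) h1'
    simp only [mul_add, mul_smul_comm, massoc hef, massoc hee, heb, zero_mul, mul_zero,
      smul_zero, zero_add] at h
    exact smul_cancel hν0 h
  have hfTe : f*(T*e) = 0 := by
    have h := congrArg (fun z => z * e) h1'
    simp only [add_mul, smul_mul_assoc, mul_assoc, hfe, hbe, mul_zero, smul_zero,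
      add_zero] at h
    exact h
  have hfTf : f*(T*f) = 0 := by
    have h := congrArg (fun z => f * (z * f)) h1'
    simp only [add_mul, mul_add, smul_mul_assoc, mul_smul_comm, mul_assoc, hff,
      massoc hff, hfb, hbf, mul_zero, smul_zero, zero_add, add_zero, zero_mul] at h
    -- h : f*(T*f) + ν•(f*(T*f)) = 0  (hopefully)
    have h2 : (1+ν) • (f*(T*f)) = (1+ν) • (0:A) := by
      rw [add_smul, one_smul, smul_zero]; exact h
    exact smul_cancel hν1 h2
  have hdec : T = e*(T*e) + e*(T*f) + f*(T*e) + f*(T*f) := by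
    have h : (e+f)*T*(e+f) = e*(T*e) + e*(T*f) + f*(T*e) + f*(T*f) := by noncomm_ring
    rw [hefo, one_mul, mul_one] at h; exact h
  have hTd : T = e*(T*e) + b := by
    conv_lhs => rw [hdec]
    rw [hETf, hfTe, hfTf, add_zero, add_zero]
  -- test (e, etf) for all t
  have key : ∀ t : A, (e*(T*e) - a) * t * f = 0 := by
    intro t
    have hma : mx η ν e (e*t*f) a = ν•(a*(t*f)) := by
      rw [mx_tau η ν e f hse hee hfe]
      simp only [mul_assoc, massoc hfa, massoc hae, hfa, hae, haf, mul_zero, zero_mul,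
        zero_add, massoc haf, smul_zero]
    have hmb : mx η ν e (e*t*f) b = 0 := by
      rw [mx_tau η ν e f hse hee hfe]
      simp only [mul_assoc, massoc hfb, massoc hbe, hfb, hbe, mul_zero, zero_mul,
        zero_add, smul_zero, add_zero]
    have h2 := inject3 Φ η ν hbij hΦ a b T hT e (e*t*f)
      (by rw [hma, hmb, phi_zero Φ η ν hbij hΦ, add_zero, add_zero])
    rw [hma, hmb, add_zero, mx_tau η ν e f hse hee hfe] at h2
    have h2' : (e*t*f)*(e*(T*e) + b) + ν•((e*(T*e) + b)*(e*t*f)) = ν•(a*(t*f)) := by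
      rw [← hTd]; exact h2
    simp only [mul_add, add_mul, smul_add, mul_assoc, massoc hfe, massoc hee,
      massoc hbe, massoc hfb, hfe, hfb, hbe, zero_mul, mul_zero, zero_add, add_zero,
      smul_zero] at h2'
    have h2'' := smul_cancel hν0 h2'
    calc (e*(T*e) - a) * t * f = e*(T*(e*(t*f))) - a*(t*f) := by
          simp only [sub_mul, mul_assoc]
      _ = 0 := by rw [h2'', sub_self]
  rcases hprime _ f key with h | h
  · rw [sub_eq_zero] at h
    rw [← hT, hTd, h]
  · exact absurd h hf0

include hbij hΦ hη1 hν1 hν0 hprime hse hsf hee hff hef hfe hefo he0 hf0 in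
/-- additivity on pairs A₂₂ × A₁₂ -/
theorem L2 (a b : A) (hfa : f*a = a) (haf : a*f = a) (heb : e*b = b) (hbf : b*f = b) :
    Φ (a+b) = Φ a + Φ b := by
  obtain ⟨T, hT⟩ := hbij.surjective (Φ a + Φ b)
  have hae : a*e = 0 := by rw [← haf, mul_assoc, hfe, mul_zero]
  have hea : e*a = 0 := by rw [← hfa, ← mul_assoc, hef, zero_mul]
  have hbe : b*e = 0 := by rw [← hbf, mul_assoc, hfe, mul_zero]
  have hfb : f*b = 0 := by rw [← heb, ← mul_assoc, hfe, zero_mul]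
  have hmea : mx η ν e e a = 0 := by
    rw [mx_proj η ν e hse hee, hea, hae, smul_zero, add_zero, smul_zero]
  have hmeb : mx η ν e e b = (1+η) • b := by
    rw [mx_proj η ν e hse hee, heb, hbe, smul_zero, add_zero]
  have h1 := inject3 Φ η ν hbij hΦ a b T hT e e
    (by rw [hmea, hmeb, phi_zero Φ η ν hbij hΦ, zero_add, zero_add])
  rw [hmea, hmeb, zero_add, mx_proj η ν e hse hee] at h1
  have h1' : e*T + ν•(T*e) = b := smul_cancel hη1 h1
  have hETe : e*(T*e) = 0 := by
    have h := congrArg (fun z => e * (z * e)) h1'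
    simp only [add_mul, mul_add, smul_mul_assoc, mul_smul_comm, mul_assoc, hee,
      massoc hee, hbe, mul_zero, smul_zero, zero_add, add_zero, zero_mul] at h
    have h2 : (1+ν) • (e*(T*e)) = (1+ν) • (0:A) := by
      rw [add_smul, one_smul, smul_zero]; exact h
    exact smul_cancel hν1 h2
  have hETf : e*(T*f) = b := by
    have h := congrArg (fun z => e * (z * f)) h1'
    simp only [add_mul, mul_add, smul_mul_assoc, mul_smul_comm, mul_assoc, hef,
      massoc hee, massoc hef, hbf, heb, mul_zero, smul_zero, zero_add, add_zero,
      zero_mul] at h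
    exact h
  have hfTe : f*(T*e) = 0 := by
    have h := congrArg (fun z => f * z) h1'
    simp only [mul_add, mul_smul_comm, massoc hfe, massoc hff, hfb, zero_mul, mul_zero,
      smul_zero, zero_add] at h
    exact smul_cancel0 hν0 h
  have hdec : T = e*(T*e) + e*(T*f) + f*(T*e) + f*(T*f) := by
    have h : (e+f)*T*(e+f) = e*(T*e) + e*(T*f) + f*(T*e) + f*(T*f) := by noncomm_ring
    rw [hefo, one_mul, mul_one] at h; exact h
  have hTd : T = b + f*(T*f) := by
    conv_lhs => rw [hdec]
    rw [hETe, hETf, hfTe, zero_add, add_zero]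
  have key : ∀ t : A, e * t * (f*(T*f) - a) = 0 := by
    intro t
    have hma : mx η ν e (e*t*f) a = e*(t*a) := by
      rw [mx_tau η ν e f hse hee hfe]
      simp only [mul_assoc, hfa, hae, massoc hae, mul_zero, zero_mul, smul_zero,
        add_zero]
    have hmb : mx η ν e (e*t*f) b = 0 := by
      rw [mx_tau η ν e f hse hee hfe]
      simp only [mul_assoc, massoc hbe, hbe, hfb, mul_zero, zero_mul, zero_add,
        smul_zero, add_zero]
    have h2 := inject3 Φ η ν hbij hΦ a b T hT e (e*t*f)
      (by rw [hma, hmb, phi_zero Φ η ν hbij hΦ, add_zero, add_zero])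
    rw [hma, hmb, add_zero, mx_tau η ν e f hse hee hfe] at h2
    have h2' : (e*t*f)*(b + f*(T*f)) + ν•((b + f*(T*f))*(e*t*f)) = e*(t*a) := by
      rw [← hTd]; exact h2
    simp only [mul_add, add_mul, smul_add, mul_assoc, massoc hfe, massoc hff,
      massoc hbe, hfb, hbe, hfe, zero_mul, mul_zero, zero_add, add_zero,
      smul_zero] at h2'
    calc e * t * (f*(T*f) - a) = e*(t*(f*(T*f))) - e*(t*a) := by
          simp only [mul_sub, mul_assoc]
      _ = 0 := by rw [← h2', sub_self]
  rcases hprime e _ key with h | h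
  · exact absurd h he0
  · rw [sub_eq_zero] at h
    rw [← hT, hTd, ← h, add_comm]

include hbij hΦ hη1 hν1 hν0 hprime hse hsf hee hff hef hfe hefo he0 hf0 in
/-- additivity on A₁₂ × A₁₂ -/
theorem L5 (a b : A) (hea : e*a = a) (haf : a*f = a) (heb : e*b = b) (hbf : b*f = b) :
    Φ (a+b) = Φ a + Φ b := by
  have main : ∀ a b : A, e*a = a → a*f = a → e*b = b → b*f = b →
      Φ (a + (1+η)•b) = Φ a + Φ ((1+η)•b) := by
    intro a b hea haf heb hbf
    have hae : a*e = 0 := by rw [← haf, mul_assoc, hfe, mul_zero]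
    have hfa : f*a = 0 := by rw [← hea, ← mul_assoc, hfe, zero_mul]
    have hbe : b*e = 0 := by rw [← hbf, mul_assoc, hfe, mul_zero]
    have hfb : f*b = 0 := by rw [← heb, ← mul_assoc, hfe, zero_mul]
    have hab : a*b = 0 := by rw [← heb, ← mul_assoc, hae, zero_mul]
    have hba : b*a = 0 := by rw [← hea, ← mul_assoc, hbe, zero_mul]
    have haef : e*a*f = a := by rw [hea, haf]
    have hbef : e*b*f = b := by rw [heb, hbf]
    have hmxa : ∀ c, mx η ν e a c = a*c + ν•(c*a) := by
      intro c
      conv_lhs => rw [← haef]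
      rw [mx_tau η ν e f hse hee hfe, haef]
    -- the key product identity
    have harg : mx η ν e (e + a) (b + f) = a + (1+η)•b := by
      rw [mx_add2, mx_add3, mx_add3, mx_proj η ν e hse hee, mx_proj η ν e hse hee,
        hmxa, hmxa]
      rw [heb, hbe, hef, hfe, hab, hba, haf, hfa]
      simp only [smul_zero, add_zero, zero_add, mul_zero, zero_mul, smul_add, smul_smul]
      module
    have hL1 : Φ (e + a) = Φ e + Φ a :=
      L1 Φ η ν hbij hΦ hη1 hν1 hν0 hprime e f hse hsf hee hff hef hfe hefo he0 hf0
        e a hee hee hea haf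
    have hL2 : Φ (b + f) = Φ b + Φ f := by
      rw [add_comm b f, add_comm (Φ b) (Φ f)]
      exact L2 Φ η ν hbij hΦ hη1 hν1 hν0 hprime e f hse hsf hee hff hef hfe hefo he0 hf0
        f b hff hff heb hbf
    have h := hΦ e (e + a) (b + f)
    rw [harg, hL1, hL2] at h
    rw [mx_add2, mx_add3, mx_add3, ← hΦ e e b, ← hΦ e e f, ← hΦ e a b,
      ← hΦ e a f] at h
    have m1 : mx η ν e e b = (1+η)•b := by
      rw [mx_proj η ν e hse hee, heb, hbe, smul_zero, add_zero]
    have m2 : mx η ν e e f = 0 := by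
      rw [mx_proj η ν e hse hee, hef, hfe, smul_zero, add_zero, smul_zero]
    have m3 : mx η ν e a b = 0 := by rw [hmxa, hab, hba, smul_zero, add_zero]
    have m4 : mx η ν e a f = a := by rw [hmxa, haf, hfa, smul_zero, add_zero]
    rw [m1, m2, m3, m4, phi_zero Φ η ν hbij hΦ] at h
    rw [h]
    abel
  have h := main a ((1+η)⁻¹•b) hea haf
    (by rw [mul_smul_comm, heb]) (by rw [smul_mul_assoc, hbf])
  rw [smul_smul, mul_inv_cancel₀ hη1, one_smul] at h
  exact h

include hbij hΦ hη1 hν1 hν0 hprime hse hsf hee hff hef hfe hefo he0 hf0 in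
/-- additivity on A₁₁ × A₁₁ -/
theorem L7 (a b : A) (hea : e*a = a) (hae : a*e = a) (heb : e*b = b) (hbe : b*e = b) :
    Φ (a+b) = Φ a + Φ b := by
  obtain ⟨T, hT⟩ := hbij.surjective (Φ a + Φ b)
  have haf : a*f = 0 := by rw [← hae, mul_assoc, hef, mul_zero]
  have hfa : f*a = 0 := by rw [← hea, ← mul_assoc, hfe, zero_mul]
  have hbf : b*f = 0 := by rw [← hbe, mul_assoc, hef, mul_zero]
  have hfb : f*b = 0 := by rw [← heb, ← mul_assoc, hfe, zero_mul]
  have hma : mx η ν f f a = 0 := by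
    rw [mx_proj η ν f hsf hff, hfa, haf, smul_zero, add_zero, smul_zero]
  have hmb : mx η ν f f b = 0 := by
    rw [mx_proj η ν f hsf hff, hfb, hbf, smul_zero, add_zero, smul_zero]
  have h1 := inject3 Φ η ν hbij hΦ a b T hT f f
    (by simp only [hma, hmb, phi_zero Φ η ν hbij hΦ, add_zero])
  rw [hma, hmb, add_zero, mx_proj η ν f hsf hff] at h1
  have h1' : f*T + ν•(T*f) = 0 := smul_cancel0 hη1 h1
  have hETf : e*(T*f) = 0 := by
    have h := congrArg (fun z => e * z) h1'
    simp only [mul_add, mul_smul_comm, massoc hef, massoc hee, zero_mul, mul_zero,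
      smul_zero, zero_add] at h
    exact smul_cancel0 hν0 h
  have hfTe : f*(T*e) = 0 := by
    have h := congrArg (fun z => z * e) h1'
    simp only [add_mul, smul_mul_assoc, mul_assoc, hfe, mul_zero, smul_zero,
      add_zero, zero_mul] at h
    exact h
  have hfTf : f*(T*f) = 0 := by
    have h := congrArg (fun z => f * (z * f)) h1'
    simp only [add_mul, mul_add, smul_mul_assoc, mul_smul_comm, mul_assoc, hff,
      massoc hff, mul_zero, smul_zero, zero_add, add_zero, zero_mul] at h
    have h2 : (1+ν) • (f*(T*f)) = 0 := by rw [add_smul, one_smul]; exact h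
    exact smul_cancel0 hν1 h2
  have hdec : T = e*(T*e) + e*(T*f) + f*(T*e) + f*(T*f) := by
    have h : (e+f)*T*(e+f) = e*(T*e) + e*(T*f) + f*(T*e) + f*(T*f) := by noncomm_ring
    rw [hefo, one_mul, mul_one] at h; exact h
  have hTd : T = e*(T*e) := by
    conv_lhs => rw [hdec]
    rw [hETf, hfTe, hfTf, add_zero, add_zero, add_zero]
  have key : ∀ t : A, (e*(T*e) - (a+b)) * t * f = 0 := by
    intro t
    have hma2 : mx η ν e (e*t*f) a = ν•(a*(t*f)) := by
      rw [mx_tau η ν e f hse hee hfe]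
      simp only [mul_assoc, hfa, hae, massoc hae, mul_zero, zero_mul, zero_add]
    have hmb2 : mx η ν e (e*t*f) b = ν•(b*(t*f)) := by
      rw [mx_tau η ν e f hse hee hfe]
      simp only [mul_assoc, hfb, hbe, massoc hbe, mul_zero, zero_mul, zero_add]
    have hsum : Φ (mx η ν e (e*t*f) a) + Φ (mx η ν e (e*t*f) b) =
        Φ (mx η ν e (e*t*f) a + mx η ν e (e*t*f) b) := by
      rw [hma2, hmb2]
      exact (L5 Φ η ν hbij hΦ hη1 hν1 hν0 hprime e f hse hsf hee hff hef hfe hefo he0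
        hf0 (ν•(a*(t*f))) (ν•(b*(t*f)))
        (by rw [mul_smul_comm, massoc hea])
        (by rw [smul_mul_assoc, mul_assoc, mul_assoc, hff])
        (by rw [mul_smul_comm, massoc heb])
        (by rw [smul_mul_assoc, mul_assoc, mul_assoc, hff])).symm
    have h2 := inject3 Φ η ν hbij hΦ a b T hT e (e*t*f) hsum
    rw [hma2, hmb2, mx_tau η ν e f hse hee hfe] at h2
    have h2' : (e*t*f)*(e*(T*e)) + ν•((e*(T*e))*(e*t*f)) = ν•(a*(t*f)) + ν•(b*(t*f)) := by
      rw [← hTd]; exact h2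
    simp only [mul_assoc, massoc hfe, massoc hee, hfe, mul_zero, zero_mul, zero_add,
      smul_zero] at h2'
    have h2'' : e*(T*(e*(t*f))) = a*(t*f) + b*(t*f) := by
      apply smul_cancel hν0; rw [smul_add]; exact h2'
    calc (e*(T*e) - (a+b)) * t * f
        = e*(T*(e*(t*f))) - (a*(t*f) + b*(t*f)) := by
          simp only [sub_mul, add_mul, mul_assoc]
      _ = 0 := by rw [h2'', sub_self]
  rcases hprime _ f key with h | h
  · rw [sub_eq_zero] at h
    rw [← hT, hTd, h]
  · exact absurd h hf0

include hbij hΦ hη1 hν1 hν0 hprime hse hsf hee hff hef hfe hefo he0 hf0 in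
/-- additivity on triples A₁₁ + A₁₂ + A₂₂ -/
theorem L9 (c1 c2 c3 : A) (h1l : e*c1 = c1) (h1r : c1*e = c1) (h2l : e*c2 = c2)
    (h2r : c2*f = c2) (h3l : f*c3 = c3) (h3r : c3*f = c3) :
    Φ (c1 + c2 + c3) = Φ c1 + Φ c2 + Φ c3 := by
  obtain ⟨T, hT⟩ := hbij.surjective (Φ c1 + Φ c2 + Φ c3)
  have hc1f : c1*f = 0 := by rw [← h1r, mul_assoc, hef, mul_zero]
  have hfc1 : f*c1 = 0 := by rw [← h1l, ← mul_assoc, hfe, zero_mul]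
  have hc2e : c2*e = 0 := by rw [← h2r, mul_assoc, hfe, mul_zero]
  have hfc2 : f*c2 = 0 := by rw [← h2l, ← mul_assoc, hfe, zero_mul]
  have hc3e : c3*e = 0 := by rw [← h3r, mul_assoc, hfe, mul_zero]
  have hec3 : e*c3 = 0 := by rw [← h3l, ← mul_assoc, hef, zero_mul]
  have hpair : Φ (c1 + c2) = Φ c1 + Φ c2 :=
    L1 Φ η ν hbij hΦ hη1 hν1 hν0 hprime e f hse hsf hee hff hef hfe hefo he0 hf0
      c1 c2 h1l h1r h2l h2r
  have hT' : Φ T = Φ (c1 + c2) + Φ c3 := by rw [hpair]; exact hT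
  -- test (e,e)
  have hma : mx η ν e e (c1+c2) = (1+η)•(c1 + c2 + ν•c1) := by
    rw [mx_proj η ν e hse hee, mul_add, add_mul, h1l, h2l, h1r, hc2e, add_zero]
  have hmb : mx η ν e e c3 = 0 := by
    rw [mx_proj η ν e hse hee, hec3, hc3e, smul_zero, add_zero, smul_zero]
  have h1 := inject3 Φ η ν hbij hΦ (c1+c2) c3 T hT' e e
    (by simp only [hma, hmb, phi_zero Φ η ν hbij hΦ, add_zero])
  rw [hma, hmb, add_zero, mx_proj η ν e hse hee] at h1
  have h1' : e*T + ν•(T*e) = c1 + c2 + ν•c1 := smul_cancel hη1 h1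
  have hETe : e*(T*e) = c1 := by
    have h := congrArg (fun z => e * (z * e)) h1'
    simp only [add_mul, mul_add, smul_mul_assoc, mul_smul_comm, mul_assoc, hee,
      massoc hee, h1r, h1l, hc2e, mul_zero, smul_zero, zero_add, add_zero,
      zero_mul] at h
    have h2 : (1+ν) • (e*(T*e)) = (1+ν) • c1 := by
      rw [add_smul, one_smul, add_smul, one_smul]; exact h
    exact smul_cancel hν1 h2
  have hETf : e*(T*f) = c2 := by
    have h := congrArg (fun z => e * (z * f)) h1'
    simp only [add_mul, mul_add, smul_mul_assoc, mul_smul_comm, mul_assoc, hef,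
      massoc hee, massoc hef, hc1f, h2r, h2l, mul_zero, smul_zero, zero_add,
      add_zero, zero_mul] at h
    exact h
  have hfTe : f*(T*e) = 0 := by
    have h := congrArg (fun z => f * z) h1'
    simp only [mul_add, mul_smul_comm, massoc hfe, massoc hff, hfc1, hfc2, zero_mul,
      mul_zero, smul_zero, zero_add, add_zero] at h
    exact smul_cancel0 hν0 h
  -- test (f,f)
  have hma2 : mx η ν f f (c1+c2) = (1+η)•(ν•c2) := by
    rw [mx_proj η ν f hsf hff, mul_add, add_mul, hfc1, hfc2, hc1f, h2r, add_zero,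
      zero_add, zero_add]
  have hmb2 : mx η ν f f c3 = (1+η)•(c3 + ν•c3) := by
    rw [mx_proj η ν f hsf hff, h3l, h3r]
  have hsum2 : Φ (mx η ν f f (c1+c2)) + Φ (mx η ν f f c3) =
      Φ (mx η ν f f (c1+c2) + mx η ν f f c3) := by
    rw [hma2, hmb2, add_comm ((1+η)•(ν•c2)) ((1+η)•(c3 + ν•c3)),
      add_comm (Φ ((1+η)•(ν•c2))) (Φ ((1+η)•(c3 + ν•c3)))]
    exact (L2 Φ η ν hbij hΦ hη1 hν1 hν0 hprime e f hse hsf hee hff hef hfe hefo he0 hf0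
      ((1+η)•(c3 + ν•c3)) ((1+η)•(ν•c2))
      (by rw [mul_smul_comm, mul_add, h3l, mul_smul_comm, h3l])
      (by rw [smul_mul_assoc, add_mul, h3r, smul_mul_assoc, h3r])
      (by rw [mul_smul_comm, mul_smul_comm, h2l])
      (by rw [smul_mul_assoc, smul_mul_assoc, h2r])).symm
  have h2 := inject3 Φ η ν hbij hΦ (c1+c2) c3 T hT' f f hsum2
  rw [hma2, hmb2, ← smul_add, mx_proj η ν f hsf hff] at h2
  have h2' : f*T + ν•(T*f) = ν•c2 + (c3 + ν•c3) := smul_cancel hη1 h2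
  have hfTf : f*(T*f) = c3 := by
    have h := congrArg (fun z => f * (z * f)) h2'
    simp only [add_mul, mul_add, smul_mul_assoc, mul_smul_comm, mul_assoc, hff,
      massoc hff, hfc2, h2r, h3r, h3l, mul_zero, smul_zero, zero_add, add_zero,
      zero_mul] at h
    have h2s : (1+ν) • (f*(T*f)) = (1+ν) • c3 := by
      rw [add_smul, one_smul, add_smul, one_smul]; exact h
    exact smul_cancel hν1 h2s
  have hdec : T = e*(T*e) + e*(T*f) + f*(T*e) + f*(T*f) := by
    have h : (e+f)*T*(e+f) = e*(T*e) + e*(T*f) + f*(T*e) + f*(T*f) := by noncomm_ring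
    rw [hefo, one_mul, mul_one] at h; exact h
  have hTd : T = c1 + c2 + c3 := by
    conv_lhs => rw [hdec]
    rw [hETe, hETf, hfTe, hfTf, add_zero]
  rw [← hTd, hT]

include hbij hΦ hη1 hν1 hν0 hprime hse hsf hee hff hef hfe hefo he0 hf0 in
theorem additive : ∀ a b : A, Φ (a + b) = Φ a + Φ b := by
  have hfeo : f + e = 1 := by rw [add_comm]; exact hefo
  have L9e := L9 Φ η ν hbij hΦ hη1 hν1 hν0 hprime e f hse hsf hee hff hef hfe hefo he0 hf0
  have L9f := L9 Φ η ν hbij hΦ hη1 hν1 hν0 hprime f e hsf hse hff hee hfe hef hfeo hf0 he0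
  have L5e := L5 Φ η ν hbij hΦ hη1 hν1 hν0 hprime e f hse hsf hee hff hef hfe hefo he0 hf0
  have L5f := L5 Φ η ν hbij hΦ hη1 hν1 hν0 hprime f e hsf hse hff hee hfe hef hfeo hf0 he0
  have L7e := L7 Φ η ν hbij hΦ hη1 hν1 hν0 hprime e f hse hsf hee hff hef hfe hefo he0 hf0
  have L7f := L7 Φ η ν hbij hΦ hη1 hν1 hν0 hprime f e hsf hse hff hee hfe hef hfeo hf0 he0
  -- membership helpers
  have m2 : ∀ x : A, (e*(x*e))*e = e*(x*e) := fun x => by rw [mul_assoc, mul_assoc, hee]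
  have m4 : ∀ x : A, (e*(x*f))*f = e*(x*f) := fun x => by rw [mul_assoc, mul_assoc, hff]
  have m6 : ∀ x : A, (f*(x*f))*f = f*(x*f) := fun x => by rw [mul_assoc, mul_assoc, hff]
  have m8 : ∀ x : A, (f*(x*e))*e = f*(x*e) := fun x => by rw [mul_assoc, mul_assoc, hee]
  -- L11 : additivity for elements with vanishing (2,1) corner
  have L11 : ∀ u v : A, f*(u*e) = 0 → f*(v*e) = 0 → Φ (u+v) = Φ u + Φ v := by
    intro u v hu hv
    have hdecu : u = e*(u*e) + e*(u*f) + f*(u*f) := by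
      have h : (e+f)*u*(e+f) = e*(u*e) + e*(u*f) + f*(u*e) + f*(u*f) := by noncomm_ring
      rw [hefo, one_mul, mul_one, hu, add_zero] at h; exact h
    have hdecv : v = e*(v*e) + e*(v*f) + f*(v*f) := by
      have h : (e+f)*v*(e+f) = e*(v*e) + e*(v*f) + f*(v*e) + f*(v*f) := by noncomm_ring
      rw [hefo, one_mul, mul_one, hv, add_zero] at h; exact h
    have hsum : u + v = (e*(u*e) + e*(v*e)) + (e*(u*f) + e*(v*f)) + (f*(u*f) + f*(v*f)) := by
      conv_lhs => rw [hdecu, hdecv]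
      abel
    rw [hsum]
    rw [L9e (e*(u*e) + e*(v*e)) (e*(u*f) + e*(v*f)) (f*(u*f) + f*(v*f))
      (by rw [mul_add, massoc hee, massoc hee])
      (by rw [add_mul, m2, m2])
      (by rw [mul_add, massoc hee, massoc hee])
      (by rw [add_mul, m4, m4])
      (by rw [mul_add, massoc hff, massoc hff])
      (by rw [add_mul, m6, m6])]
    rw [L7e (e*(u*e)) (e*(v*e)) (massoc hee _) (m2 u) (massoc hee _) (m2 v)]
    rw [L5e (e*(u*f)) (e*(v*f)) (massoc hee _) (m4 u) (massoc hee _) (m4 v)]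
    rw [L7f (f*(u*f)) (f*(v*f)) (massoc hff _) (m6 u) (massoc hff _) (m6 v)]
    conv_rhs => rw [hdecu, hdecv]
    rw [L9e (e*(u*e)) (e*(u*f)) (f*(u*f)) (massoc hee _) (m2 u) (massoc hee _) (m4 u)
      (massoc hff _) (m6 u)]
    rw [L9e (e*(v*e)) (e*(v*f)) (f*(v*f)) (massoc hee _) (m2 v) (massoc hee _) (m4 v)
      (massoc hff _) (m6 v)]
    abel
  -- L12 : additivity for elements with vanishing (1,2) corner
  have L12 : ∀ u v : A, e*(u*f) = 0 → e*(v*f) = 0 → Φ (u+v) = Φ u + Φ v := by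
    intro u v hu hv
    have hdecu : u = f*(u*f) + f*(u*e) + e*(u*e) := by
      have h : (f+e)*u*(f+e) = f*(u*f) + f*(u*e) + e*(u*f) + e*(u*e) := by noncomm_ring
      rw [hfeo, one_mul, mul_one, hu, add_zero] at h; exact h
    have hdecv : v = f*(v*f) + f*(v*e) + e*(v*e) := by
      have h : (f+e)*v*(f+e) = f*(v*f) + f*(v*e) + e*(v*f) + e*(v*e) := by noncomm_ring
      rw [hfeo, one_mul, mul_one, hv, add_zero] at h; exact h
    have hsum : u + v = (f*(u*f) + f*(v*f)) + (f*(u*e) + f*(v*e)) + (e*(u*e) + e*(v*e)) := by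
      conv_lhs => rw [hdecu, hdecv]
      abel
    rw [hsum]
    rw [L9f (f*(u*f) + f*(v*f)) (f*(u*e) + f*(v*e)) (e*(u*e) + e*(v*e))
      (by rw [mul_add, massoc hff, massoc hff])
      (by rw [add_mul, m6, m6])
      (by rw [mul_add, massoc hff, massoc hff])
      (by rw [add_mul, m8, m8])
      (by rw [mul_add, massoc hee, massoc hee])
      (by rw [add_mul, m2, m2])]
    rw [L7f (f*(u*f)) (f*(v*f)) (massoc hff _) (m6 u) (massoc hff _) (m6 v)]
    rw [L5f (f*(u*e)) (f*(v*e)) (massoc hff _) (m8 u) (massoc hff _) (m8 v)]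
    rw [L7e (e*(u*e)) (e*(v*e)) (massoc hee _) (m2 u) (massoc hee _) (m2 v)]
    conv_rhs => rw [hdecu, hdecv]
    rw [L9f (f*(u*f)) (f*(u*e)) (e*(u*e)) (massoc hff _) (m6 u) (massoc hff _) (m8 u)
      (massoc hee _) (m2 u)]
    rw [L9f (f*(v*f)) (f*(v*e)) (e*(v*e)) (massoc hff _) (m6 v) (massoc hff _) (m8 v)
      (massoc hee _) (m2 v)]
    abel
  -- G1
  have G1 : ∀ a b T : A, Φ T = Φ a + Φ b →
      (∀ t, (e*t*f)*(T-(a+b)) + ν•((T-(a+b))*(e*t*f)) = 0) ∧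
      (∀ t, (f*t*e)*(T-(a+b)) + ν•((T-(a+b))*(f*t*e)) = 0) := by
    intro a b T hT
    constructor
    · intro t
      have mem : ∀ c : A, f*((mx η ν e (e*t*f) c)*e) = 0 := by
        intro c
        rw [mx_tau η ν e f hse hee hfe]
        simp only [mul_add, add_mul, smul_mul_assoc, mul_smul_comm, mul_assoc,
          massoc hfe, hfe, mul_zero, smul_zero, zero_mul, add_zero, zero_add]
      have hsum : Φ (mx η ν e (e*t*f) a) + Φ (mx η ν e (e*t*f) b) =
          Φ (mx η ν e (e*t*f) a + mx η ν e (e*t*f) b) := (L11 _ _ (mem a) (mem b)).symm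
      have h := inject3 Φ η ν hbij hΦ a b T hT e (e*t*f) hsum
      rw [← mx_add3] at h
      rw [mx_tau η ν e f hse hee hfe, mx_tau η ν e f hse hee hfe] at h
      calc (e*t*f)*(T-(a+b)) + ν•((T-(a+b))*(e*t*f))
          = ((e*t*f)*T + ν•(T*(e*t*f))) - ((e*t*f)*(a+b) + ν•((a+b)*(e*t*f))) := by
            rw [mul_sub, sub_mul, smul_sub]; abel
        _ = 0 := by rw [h, sub_self]
    · intro t
      have mem : ∀ c : A, e*((mx η ν f (f*t*e) c)*f) = 0 := by
        intro c
        rw [mx_tau η ν f e hsf hff hef]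
        simp only [mul_add, add_mul, smul_mul_assoc, mul_smul_comm, mul_assoc,
          massoc hef, hef, mul_zero, smul_zero, zero_mul, add_zero, zero_add]
      have hsum : Φ (mx η ν f (f*t*e) a) + Φ (mx η ν f (f*t*e) b) =
          Φ (mx η ν f (f*t*e) a + mx η ν f (f*t*e) b) := (L12 _ _ (mem a) (mem b)).symm
      have h := inject3 Φ η ν hbij hΦ a b T hT f (f*t*e) hsum
      rw [← mx_add3] at h
      rw [mx_tau η ν f e hsf hff hef, mx_tau η ν f e hsf hff hef] at h
      calc (f*t*e)*(T-(a+b)) + ν•((T-(a+b))*(f*t*e))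
          = ((f*t*e)*T + ν•(T*(f*t*e))) - ((f*t*e)*(a+b) + ν•((a+b)*(f*t*e))) := by
            rw [mul_sub, sub_mul, smul_sub]; abel
        _ = 0 := by rw [h, sub_self]
  -- main argument
  intro a b
  obtain ⟨T, hT⟩ := hbij.surjective (Φ a + Φ b)
  obtain ⟨hD1, hD2⟩ := G1 a b T hT
  have hfDe : f*((T-(a+b))*e) = 0 := by
    have key : ∀ t, e*t*(f*((T-(a+b))*e)) = 0 := by
      intro t
      have h := congrArg (fun z => e * (z * e)) (hD1 t)
      simp only [mul_add, add_mul, smul_mul_assoc, mul_smul_comm, mul_assoc,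
        massoc hee, massoc hfe, hfe, mul_zero, smul_zero, zero_mul, add_zero,
        zero_add] at h
      simpa only [mul_assoc] using h
    rcases hprime e _ key with h | h
    · exact absurd h he0
    · exact h
  have heDf : e*((T-(a+b))*f) = 0 := by
    have key : ∀ t, f*t*(e*((T-(a+b))*f)) = 0 := by
      intro t
      have h := congrArg (fun z => f * (z * f)) (hD2 t)
      simp only [mul_add, add_mul, smul_mul_assoc, mul_smul_comm, mul_assoc,
        massoc hff, massoc hef, hef, mul_zero, smul_zero, zero_mul, add_zero,
        zero_add] at h
      simpa only [mul_assoc] using h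
    rcases hprime f _ key with h | h
    · exact absurd h hf0
    · exact h
  have he1 : e*(T-(a+b)) = e*((T-(a+b))*e) := by
    calc e*(T-(a+b)) = e*((T-(a+b))*(e+f)) := by rw [hefo, mul_one]
      _ = e*((T-(a+b))*e) + e*((T-(a+b))*f) := by rw [mul_add, mul_add]
      _ = e*((T-(a+b))*e) := by rw [heDf, add_zero]
  have he2 : (T-(a+b))*e = e*((T-(a+b))*e) := by
    calc (T-(a+b))*e = (e+f)*((T-(a+b))*e) := by rw [hefo, one_mul]
      _ = e*((T-(a+b))*e) + f*((T-(a+b))*e) := by rw [add_mul]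
      _ = e*((T-(a+b))*e) := by rw [hfDe, add_zero]
  have hf1 : f*(T-(a+b)) = f*((T-(a+b))*f) := by
    calc f*(T-(a+b)) = f*((T-(a+b))*(e+f)) := by rw [hefo, mul_one]
      _ = f*((T-(a+b))*e) + f*((T-(a+b))*f) := by rw [mul_add, mul_add]
      _ = f*((T-(a+b))*f) := by rw [hfDe, zero_add]
  have hf2 : (T-(a+b))*f = f*((T-(a+b))*f) := by
    calc (T-(a+b))*f = (e+f)*((T-(a+b))*f) := by rw [hefo, one_mul]
      _ = e*((T-(a+b))*f) + f*((T-(a+b))*f) := by rw [add_mul]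
      _ = f*((T-(a+b))*f) := by rw [heDf, zero_add]
  -- second stage : kill the (1,1) corner
  have heDe : e*((T-(a+b))*e) = 0 := by
    have hT2 : Φ (mx η ν e e T) = Φ (mx η ν e e a) + Φ (mx η ν e e b) := by
      rw [hΦ, hT, mx_add3, ← hΦ, ← hΦ]
    have h2 := (G1 _ _ _ hT2).2
    have hdiff : mx η ν e e T - (mx η ν e e a + mx η ν e e b) =
        ((1+η)*(1+ν))•(e*((T-(a+b))*e)) := by
      rw [← mx_add3, mx_proj η ν e hse hee, mx_proj η ν e hse hee, ← smul_sub]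
      have : e*T + ν•(T*e) - (e*(a+b) + ν•((a+b)*e)) =
          e*(T-(a+b)) + ν•((T-(a+b))*e) := by
        rw [mul_sub, sub_mul, smul_sub]; abel
      rw [this, he2, he1, ← smul_smul]
      congr 1
      rw [add_smul, one_smul]
      simp only [massoc hee]
    have key : ∀ t, f*t*(e*((T-(a+b))*e)) = 0 := by
      intro t
      have h := h2 t
      rw [hdiff] at h
      simp only [mul_smul_comm, smul_mul_assoc, mul_assoc, massoc hef, hef,
        mul_zero, smul_zero, zero_mul, add_zero, massoc hee] at h
      have h' := smul_cancel0 (mul_ne_zero hη1 hν1) h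
      simpa only [mul_assoc] using h'
    rcases hprime f _ key with h | h
    · exact absurd h hf0
    · exact h
  have hfDf : f*((T-(a+b))*f) = 0 := by
    have hT3 : Φ (mx η ν f f T) = Φ (mx η ν f f a) + Φ (mx η ν f f b) := by
      rw [hΦ, hT, mx_add3, ← hΦ, ← hΦ]
    have h3 := (G1 _ _ _ hT3).1
    have hdiff : mx η ν f f T - (mx η ν f f a + mx η ν f f b) =
        ((1+η)*(1+ν))•(f*((T-(a+b))*f)) := by
      rw [← mx_add3, mx_proj η ν f hsf hff, mx_proj η ν f hsf hff, ← smul_sub]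
      have : f*T + ν•(T*f) - (f*(a+b) + ν•((a+b)*f)) =
          f*(T-(a+b)) + ν•((T-(a+b))*f) := by
        rw [mul_sub, sub_mul, smul_sub]; abel
      rw [this, hf2, hf1, ← smul_smul]
      congr 1
      rw [add_smul, one_smul]
      simp only [massoc hff]
    have key : ∀ t, e*t*(f*((T-(a+b))*f)) = 0 := by
      intro t
      have h := h3 t
      rw [hdiff] at h
      simp only [mul_smul_comm, smul_mul_assoc, mul_assoc, massoc hfe, hfe,
        mul_zero, smul_zero, zero_mul, add_zero, massoc hff] at h
      have h' := smul_cancel0 (mul_ne_zero hη1 hν1) h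
      simpa only [mul_assoc] using h'
    rcases hprime e _ key with h | h
    · exact absurd h he0
    · exact h
  have hD0 : T - (a+b) = 0 := by
    have h : (e+f)*(T-(a+b))*(e+f) = e*((T-(a+b))*e) + e*((T-(a+b))*f) +
        f*((T-(a+b))*e) + f*((T-(a+b))*f) := by noncomm_ring
    rw [hefo, one_mul, mul_one, heDe, heDf, hfDe, hfDf, add_zero, add_zero,
      add_zero] at h
    exact h
  rw [sub_eq_zero] at hD0
  rw [← hT, hD0]

end peirce

theorem mx_one_one (η ν : ℂ) (c : A) : mx η ν 1 1 c = ((1+η)*(1+ν))•c := by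
  simp only [mx, star_one, one_mul, mul_one, add_mul, mul_add, smul_mul_assoc,
    mul_smul_comm, smul_add, smul_smul]
  module

theorem mx_slot1 (η ν : ℂ) (x : A) : mx η ν x 1 1 = ((1+η)*(1+ν))•(star x) := by
  simp only [mx, one_mul, mul_one, add_mul, mul_add, smul_mul_assoc,
    mul_smul_comm, smul_add, smul_smul]
  module

theorem mx_slot2 (η ν : ℂ) (b c : A) :
    mx η ν 1 b c = ((1+η)•b)*c + ν•(c*((1+η)•b)) := by
  simp only [mx, star_one, one_mul, mul_one, add_mul, mul_add, smul_mul_assoc,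
    mul_smul_comm, smul_add, smul_smul, add_smul, one_smul]
  try module

section part2

variable (Φ : A → B) (η ν : ℂ)
variable (hbij : Function.Bijective Φ)
variable (hΦ : ∀ a b c : A, Φ (mx η ν a b c) = mx η ν (Φ a) (Φ b) (Φ c))
variable (hη1 : 1 + η ≠ 0) (hν1 : 1 + ν ≠ 0) (hν0 : ν ≠ 0)
variable (hone : (1:A) ≠ 0)
variable (hBprime : ∀ x y : B, (∀ t : B, x * t * y = 0) → x = 0 ∨ y = 0)
variable (hp1 : star (Φ 1) = Φ 1) (hp2 : Φ 1 * Φ 1 = Φ 1)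

include hbij hΦ hη1 hν1 hν0 hone hBprime hp1 hp2 in
theorem unital : Φ 1 = (1:B) := by
  have hlam : ∀ c : A, Φ (((1+η)*(1+ν))•c) = (1+η)•(Φ 1*Φ c + ν•(Φ c*Φ 1)) := by
    intro c
    have h := hΦ 1 1 c
    rw [mx_one_one, mx_proj η ν (Φ 1) hp1 hp2] at h
    exact h
  have h0 : Φ 1 * (1 - Φ 1) = 0 := by rw [mul_sub, mul_one, hp2, sub_self]
  have h0' : (1 - Φ 1) * Φ 1 = 0 := by rw [sub_mul, one_mul, hp2, sub_self]
  have key : ∀ z : B, (1 - Φ 1) * z * (1 - Φ 1) = 0 := by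
    intro z
    obtain ⟨c, hc⟩ := hbij.surjective ((1 - Φ 1) * z * (1 - Φ 1))
    have h := hlam c
    rw [hc] at h
    have hz : Φ 1*((1 - Φ 1) * z * (1 - Φ 1)) + ν•(((1 - Φ 1) * z * (1 - Φ 1))*Φ 1) = 0 := by
      simp only [mul_assoc, massoc h0, h0', mul_zero, zero_mul, smul_zero, add_zero,
        zero_add]
    rw [hz, smul_zero] at h
    have hc0 : c = 0 := by
      apply smul_cancel0 (mul_ne_zero hη1 hν1)
      apply hbij.injective
      rw [h, phi_zero Φ η ν hbij hΦ]
    rw [← hc, hc0, phi_zero Φ η ν hbij hΦ]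
  rcases hBprime _ _ key with h | h
  · rw [sub_eq_zero] at h; exact h.symm
  · rw [sub_eq_zero] at h; exact h.symm

include hbij hΦ hη1 hν1 hν0 hone hBprime hp1 hp2 in
theorem lam_homog : ∀ c : A, Φ (((1+η)*(1+ν))•c) = ((1+η)*(1+ν))•(Φ c) := by
  intro c
  have h := hΦ 1 1 c
  rw [mx_one_one, unital Φ η ν hbij hΦ hη1 hν1 hν0 hone hBprime hp1 hp2,
    mx_one_one] at h
  exact h

include hbij hΦ hη1 hν1 hν0 hone hBprime hp1 hp2 in
theorem star_pres : ∀ a : A, Φ (star a) = star (Φ a) := by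
  intro a
  have h := hΦ a 1 1
  rw [mx_slot1, unital Φ η ν hbij hΦ hη1 hν1 hν0 hone hBprime hp1 hp2,
    mx_slot1, lam_homog Φ η ν hbij hΦ hη1 hν1 hν0 hone hBprime hp1 hp2] at h
  exact smul_cancel (mul_ne_zero hη1 hν1) h

include hbij hΦ hη1 hν1 hν0 hone hBprime hp1 hp2 in
theorem jordan (hadd : ∀ a b : A, Φ (a+b) = Φ a + Φ b) :
    ∀ u v : A, Φ (u*v + v*u) = Φ u * Φ v + Φ v * Φ u := by
  have hΦ1 := unital Φ η ν hbij hΦ hη1 hν1 hν0 hone hBprime hp1 hp2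
  have hη1' : (1+η) ≠ 0 := hη1
  have hdia : ∀ u c : A, Φ (u*c + ν•(c*u)) =
      ((1+η)•Φ ((1+η)⁻¹•u)) * Φ c + ν•(Φ c * ((1+η)•Φ ((1+η)⁻¹•u))) := by
    intro u c
    have h := hΦ 1 ((1+η)⁻¹•u) c
    rw [hΦ1] at h
    rw [mx_slot2, mx_slot2] at h
    rw [smul_smul, mul_inv_cancel₀ hη1', one_smul] at h
    exact h
  obtain ⟨w, hw⟩ : ∃ w : B, w = (1+η)•Φ ((1+η)⁻¹•(1:A)) := ⟨_, rfl⟩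
  have hclub : ∀ c : A, Φ ((1+ν)•c) = w*Φ c + ν•(Φ c*w) := by
    intro c
    have h := hdia 1 c
    rw [← hw] at h
    have e : (1:A)*c + ν•(c*1) = (1+ν)•c := by
      rw [one_mul, mul_one, add_smul, one_smul]
    rw [e] at h
    exact h
  have hg2 : ∀ u : A, Φ ((1+ν)•u) = (1+ν)•((1+η)•Φ ((1+η)⁻¹•u)) := by
    intro u
    have h := hdia u 1
    have e : u*1 + ν•((1:A)*u) = (1+ν)•u := by
      rw [one_mul, mul_one, add_smul, one_smul]
    rw [e, hΦ1, mul_one, one_mul] at h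
    rw [h]
    module
  have hΦν1 : Φ ((1+ν)•(1:A)) = (1+ν)•w := by
    rw [hclub 1, hΦ1, mul_one, one_mul, add_smul, one_smul]
  have hgν : (1+η)•Φ ((1+η)⁻¹•((1+ν)•(1:A))) = (1+ν)•(w*w) := by
    apply smul_cancel hν1
    rw [← hg2 ((1+ν)•(1:A)), hclub ((1+ν)•(1:A)), hΦν1]
    simp only [mul_smul_comm, smul_mul_assoc, smul_smul, smul_add]
    module
  have hW : ∀ y : B, w*(y*w) + w*(y*w) = w*(w*y) + y*(w*w) := by
    intro y
    obtain ⟨c, hc⟩ := hbij.surjective y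
    have h2 := hdia ((1+ν)•(1:A)) c
    have e : ((1+ν)•(1:A))*c + ν•(c*((1+ν)•(1:A))) = (1+ν)•((1+ν)•c) := by
      simp only [smul_mul_assoc, mul_smul_comm, one_mul, mul_one, smul_smul]
      module
    rw [e, hgν, hclub ((1+ν)•c), hclub c, hc] at h2
    have h3 : ν•(w*(y*w) + w*(y*w)) - ν•(w*(w*y) + y*(w*w)) =
        (w*(w*y + ν•(y*w)) + ν•((w*y + ν•(y*w))*w)) -
        (((1+ν)•(w*w))*y + ν•(y*((1+ν)•(w*w)))) := by
      simp only [mul_add, add_mul, smul_add, mul_smul_comm, smul_mul_assoc, smul_smul,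
        mul_assoc, smul_sub]
      module
    rw [h2, sub_self] at h3
    exact smul_cancel hν0 (sub_eq_zero.mp h3)
  have hδ2 : ∀ y : B, w*(w*y - y*w) - (w*y - y*w)*w = 0 := by
    intro y
    have e : w*(w*y - y*w) - (w*y - y*w)*w =
        (w*(w*y) + y*(w*w)) - (w*(y*w) + w*(y*w)) := by noncomm_ring
    rw [e, ← hW y, sub_self]
  have hδmul : ∀ x y : B, (w*x - x*w) * (w*y - y*w) = 0 := by
    intro x y
    have e : (w*x - x*w)*(w*y - y*w) + (w*x - x*w)*(w*y - y*w) =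
        (w*(w*(x*y) - (x*y)*w) - (w*(x*y) - (x*y)*w)*w)
        - (w*(w*x - x*w) - (w*x - x*w)*w)*y
        - x*(w*(w*y - y*w) - (w*y - y*w)*w) := by
      noncomm_ring
    rw [hδ2, hδ2, hδ2, zero_mul, mul_zero, sub_zero, sub_zero] at e
    have h2 : (2:ℂ)•((w*x - x*w)*(w*y - y*w)) = 0 := by rw [two_smul]; exact e
    exact smul_cancel0 two_ne_zero h2
  have hδmid : ∀ x z y : B, (w*x - x*w) * z * (w*y - y*w) = 0 := by
    intro x z y
    have e : (w*x - x*w) * z * (w*y - y*w) =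
        (w*(x*z) - (x*z)*w)*(w*y - y*w) - x*((w*z - z*w)*(w*y - y*w)) := by
      noncomm_ring
    rw [e, hδmul, hδmul, mul_zero, sub_zero]
  have hwc : ∀ y : B, w*y = y*w := by
    intro y
    rcases hBprime (w*y - y*w) (w*y - y*w) (fun t => hδmid y t y) with h | h
    · exact sub_eq_zero.mp h
    · exact sub_eq_zero.mp h
  have hw0 : w ≠ 0 := by
    intro hw0
    have h := hΦν1
    rw [hw0, smul_zero] at h
    have h2 := hbij.injective (h.trans (phi_zero Φ η ν hbij hΦ).symm)
    exact hone (smul_cancel0 hν1 h2)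
  have hwcan : ∀ x y : B, w*x = w*y → x = y := by
    intro x y hxy
    have h : ∀ t : B, w*t*(x - y) = 0 := by
      intro t
      rw [hwc t, mul_assoc, mul_sub, hxy, sub_self, mul_zero]
    rcases hBprime w (x - y) h with h' | h'
    · exact absurd h' hw0
    · exact sub_eq_zero.mp h'
  have hgw : ∀ u : A, (1+η)•Φ ((1+η)⁻¹•u) = w*Φ u := by
    intro u
    apply smul_cancel hν1
    rw [← hg2 u, hclub u, ← hwc (Φ u), add_smul, one_smul]
  intro u v
  apply hwcan
  have h1 := hdia u v
  rw [hgw u] at h1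
  have h2 := hdia v u
  rw [hgw v] at h2
  have hsum := hadd (u*v + ν•(v*u)) (v*u + ν•(u*v))
  rw [h1, h2] at hsum
  have e : (u*v + ν•(v*u)) + (v*u + ν•(u*v)) = (1+ν)•(u*v + v*u) := by
    module
  rw [e, hclub (u*v + v*u)] at hsum
  have hL : w*Φ (u*v+v*u) + ν•(Φ (u*v+v*u)*w) = (1+ν)•(w*Φ (u*v+v*u)) := by
    rw [← hwc, add_smul, one_smul]
  have hR : (w*Φ u)*Φ v + ν•(Φ v*(w*Φ u)) + ((w*Φ v)*Φ u + ν•(Φ u*(w*Φ v))) =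
      (1+ν)•(w*(Φ u*Φ v + Φ v*Φ u)) := by
    have c1 : Φ v*(w*Φ u) = w*(Φ v*Φ u) := by rw [← mul_assoc, ← hwc, mul_assoc]
    have c2 : Φ u*(w*Φ v) = w*(Φ u*Φ v) := by rw [← mul_assoc, ← hwc, mul_assoc]
    rw [c1, c2, mul_assoc, mul_assoc]
    simp only [mul_add, smul_add, add_smul, one_smul]
    module
  rw [hL, hR] at hsum
  exact smul_cancel hν1 hsum

end part2

section herstein

variable (Φ : A → B)
variable (hsurj : Function.Surjective Φ)
variable (hadd : ∀ a b : A, Φ (a+b) = Φ a + Φ b)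
variable (hBprime : ∀ x y : B, (∀ t : B, x * t * y = 0) → x = 0 ∨ y = 0)
variable (hjord : ∀ u v : A, Φ (u*v + v*u) = Φ u * Φ v + Φ v * Φ u)

include hsurj hadd hBprime hjord in
theorem herstein : (∀ a b : A, Φ (a*b) = Φ a*Φ b) ∨ (∀ a b : A, Φ (a*b) = Φ b*Φ a) := by
  have hsub : ∀ x y : A, Φ (x - y) = Φ x - Φ y := by
    intro x y
    have h := hadd (x - y) y
    have e : x - y + y = x := by abel
    rw [e] at h
    exact eq_sub_of_add_eq h.symm
  have hsq : ∀ u : A, Φ (u*u) = Φ u*Φ u := by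
    intro u
    have h := hjord u u
    rw [hadd] at h
    have h2 : (2:ℂ)•Φ (u*u) = (2:ℂ)•(Φ u*Φ u) := by
      rw [two_smul, two_smul]; exact h
    exact smul_cancel two_ne_zero h2
  have haba : ∀ a b : A, Φ (a*b*a) = Φ a*Φ b*Φ a := by
    intro a b
    have h1 := hjord a (a*b + b*a)
    have h2 := hjord a b
    have h3 := hjord (a*a) b
    have e : a*b*a + a*b*a = (a*(a*b + b*a) + (a*b + b*a)*a) - ((a*a)*b + b*(a*a)) := by
      noncomm_ring
    have h4 : Φ (a*b*a) + Φ (a*b*a) =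
        Φ (a*(a*b + b*a) + (a*b + b*a)*a) - Φ ((a*a)*b + b*(a*a)) := by
      rw [← hadd, e, hsub]
    rw [h1, h3, h2, hsq a] at h4
    have h5 : (2:ℂ)•Φ (a*b*a) = (2:ℂ)•(Φ a*Φ b*Φ a) := by
      rw [two_smul, two_smul, h4]; noncomm_ring
    exact smul_cancel two_ne_zero h5
  have htrip : ∀ a r b : A, Φ (a*r*b + b*r*a) = Φ a*Φ r*Φ b + Φ b*Φ r*Φ a := by
    intro a r b
    have h1 := haba (a+b) r
    rw [hadd a b] at h1
    have e : a*r*b + b*r*a = (a+b)*r*(a+b) - a*r*a - b*r*b := by noncomm_ring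
    have h2 : Φ (a*r*b + b*r*a) = Φ ((a+b)*r*(a+b)) - Φ (a*r*a) - Φ (b*r*b) := by
      rw [e, hsub, hsub]
    rw [h1, haba a r, haba b r] at h2
    rw [h2]; noncomm_ring
  have hbre : ∀ a b : A, ∀ z : B, (Φ (a*b) - Φ a*Φ b) * z * (Φ (a*b) - Φ b*Φ a)
      + (Φ (a*b) - Φ b*Φ a) * z * (Φ (a*b) - Φ a*Φ b) = 0 := by
    intro a b z
    obtain ⟨r, hr⟩ := hsurj z
    subst hr
    have hba : Φ (b*a) = Φ a*Φ b + Φ b*Φ a - Φ (a*b) := by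
      have h := hjord a b
      rw [hadd] at h
      exact eq_sub_of_add_eq (by rw [add_comm]; exact h)
    have hX1 := haba (a*b) r
    have hX2 := haba (b*a) r
    have hX4 := htrip a (a*r*b + b*r*a) b
    have hu := htrip a r b
    have hX5 := htrip (a*a) r (b*b)
    have e : (a*b)*r*(a*b) + (b*a)*r*(b*a) =
        (a*(a*r*b + b*r*a)*b + b*(a*r*b + b*r*a)*a) - ((a*a)*r*(b*b) + (b*b)*r*(a*a)) := by
      noncomm_ring
    have h6 : Φ ((a*b)*r*(a*b)) + Φ ((b*a)*r*(b*a)) =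
        Φ (a*(a*r*b + b*r*a)*b + b*(a*r*b + b*r*a)*a) - Φ ((a*a)*r*(b*b) + (b*b)*r*(a*a)) := by
      rw [← hadd, e, hsub]
    rw [hX1, hX2, hX4, hX5, hu, hsq a, hsq b, hba] at h6
    have e2 : (Φ (a*b) - Φ a*Φ b) * Φ r * (Φ (a*b) - Φ b*Φ a)
        + (Φ (a*b) - Φ b*Φ a) * Φ r * (Φ (a*b) - Φ a*Φ b)
        = (Φ (a*b)*Φ r*Φ (a*b) +
            (Φ a*Φ b + Φ b*Φ a - Φ (a*b))*Φ r*(Φ a*Φ b + Φ b*Φ a - Φ (a*b)))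
          - (Φ a*(Φ a*Φ r*Φ b + Φ b*Φ r*Φ a)*Φ b + Φ b*(Φ a*Φ r*Φ b + Φ b*Φ r*Φ a)*Φ a
            - (Φ a*Φ a*Φ r*(Φ b*Φ b) + Φ b*Φ b*Φ r*(Φ a*Φ a))) := by
      noncomm_ring
    rw [e2, h6, sub_self]
  have hdich : ∀ a b : A, Φ (a*b) = Φ a*Φ b ∨ Φ (a*b) = Φ b*Φ a := by
    intro a b
    by_cases ht : Φ (a*b) - Φ b*Φ a = 0
    · right; exact sub_eq_zero.mp ht
    · left
      obtain ⟨s, hs⟩ : ∃ s : B, s = Φ (a*b) - Φ a*Φ b := ⟨_, rfl⟩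
      obtain ⟨t, htd⟩ : ∃ t : B, t = Φ (a*b) - Φ b*Φ a := ⟨_, rfl⟩
      have h1 : ∀ z, s*z*t = -(t*z*s) := by
        intro z
        apply eq_neg_of_add_eq_zero_left
        rw [hs, htd]
        exact hbre a b z
      have h2 : ∀ z1 z2, t*z1*(s*(z2*s)) = 0 := by
        intro z1 z2
        have e1 : s*(z1*s*z2)*t = -(t*(z1*s*z2)*s) := h1 _
        have e2 : s*z2*t = -(t*z2*s) := h1 z2
        have e3 : s*z1*t = -(t*z1*s) := h1 z1
        have a1 : s*(z1*s*z2)*t = (s*z1)*(s*z2*t) := by noncomm_ring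
        rw [e2] at a1
        have a2 : (s*z1)*(-(t*z2*s)) = -((s*z1*t)*(z2*s)) := by noncomm_ring
        rw [e3] at a2
        have a3 : -((-(t*z1*s))*(z2*s)) = t*z1*(s*(z2*s)) := by noncomm_ring
        have a4 : -(t*(z1*s*z2)*s) = -(t*z1*(s*(z2*s))) := by noncomm_ring
        have a5 : t*z1*(s*(z2*s)) = -(t*z1*(s*(z2*s))) := by
          calc t*z1*(s*(z2*s)) = -((-(t*z1*s))*(z2*s)) := a3.symm
            _ = (s*z1)*(-(t*z2*s)) := a2.symm
            _ = s*(z1*s*z2)*t := a1.symm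
            _ = -(t*(z1*s*z2)*s) := e1
            _ = -(t*z1*(s*(z2*s))) := a4
        have a6 : t*z1*(s*(z2*s)) + t*z1*(s*(z2*s)) = 0 :=
          add_eq_zero_iff_eq_neg.mpr a5
        have a7 : (2:ℂ)•(t*z1*(s*(z2*s))) = 0 := by rw [two_smul]; exact a6
        exact smul_cancel0 two_ne_zero a7
      have h3 : ∀ z2, s*(z2*s) = 0 := by
        intro z2
        rcases hBprime t (s*(z2*s)) (fun z1 => h2 z1 z2) with h | h
        · exact absurd (htd ▸ h) ht
        · exact h
      have h4 : s = 0 := by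
        rcases hBprime s s (fun z => by rw [mul_assoc]; exact h3 z) with h | h
        · exact h
        · exact h
      rw [hs] at h4
      exact sub_eq_zero.mp h4
  have hpt : ∀ a : A, (∀ y, Φ (a*y) = Φ a*Φ y) ∨ (∀ y, Φ (a*y) = Φ y*Φ a) := by
    intro a
    by_contra hcon
    push_neg at hcon
    obtain ⟨⟨y1, hy1⟩, ⟨y2, hy2⟩⟩ := hcon
    have hy1' : Φ (a*y1) = Φ y1*Φ a := (hdich a y1).resolve_left hy1
    have hy2' : Φ (a*y2) = Φ a*Φ y2 := (hdich a y2).resolve_right hy2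
    have h := hdich a (y1 + y2)
    rw [mul_add, hadd, hadd, hy1', hy2'] at h
    rcases h with h | h
    · rw [mul_add] at h
      have h' : Φ y1*Φ a = Φ a*Φ y1 := add_right_cancel h
      exact hy1 (hy1'.trans h')
    · rw [add_mul] at h
      have h' : Φ a*Φ y2 = Φ y2*Φ a := add_left_cancel h
      exact hy2 (hy2'.trans h')
  by_contra hcon
  push_neg at hcon
  obtain ⟨⟨a1, b1, h1⟩, ⟨a2, b2, h2⟩⟩ := hcon
  have ha1 : ∀ y, Φ (a1*y) = Φ y*Φ a1 := by
    rcases hpt a1 with h | h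
    · exact absurd (h b1) h1
    · exact h
  have ha2 : ∀ y, Φ (a2*y) = Φ a2*Φ y := by
    rcases hpt a2 with h | h
    · exact h
    · exact absurd (h b2) h2
  rcases hpt (a1 + a2) with h | h
  · have hcomm : ∀ y, Φ y*Φ a1 = Φ a1*Φ y := by
      intro y
      have hh := h y
      rw [add_mul, hadd, ha1 y, ha2 y, hadd, add_mul] at hh
      exact add_right_cancel hh
    exact h1 ((ha1 b1).trans (hcomm b1))
  · have hcomm : ∀ y, Φ a2*Φ y = Φ y*Φ a2 := by
      intro y
      have hh := h y
      rw [add_mul, hadd, ha1 y, ha2 y, hadd, mul_add] at hh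
      exact add_left_cancel hh
    exact h2 ((ha2 b2).trans (hcomm b2))

end herstein

end Stmt16

open Stmt16 in
theorem stmt16 {A B : Type*} [Ring A] [Algebra ℂ A] [StarRing A]
    [Ring B] [Algebra ℂ B] [StarRing B]
    (hprime : ∀ x y : A, (∀ t : A, x * t * y = 0) → x = 0 ∨ y = 0)
    (e : A) (hestar : star e = e) (heidem : e * e = e) (he0 : e ≠ 0) (he1 : e ≠ 1)
    (Φ : A → B) (hbij : Function.Bijective Φ)
    (η ν : ℂ) (hη0 : η ≠ 0) (hν0 : ν ≠ 0)
    (hη : η ≠ -1) (hν : ν ≠ -1)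
    (hΦ : ∀ a b c : A,
      Φ ((star a * b + η • (b * star a)) * c +
          ν • (c * (star a * b + η • (b * star a)))) =
      (star (Φ a) * Φ b + η • (Φ b * star (Φ a))) * Φ c +
          ν • (Φ c * (star (Φ a) * Φ b + η • (Φ b * star (Φ a))))) :
    (∀ a b : A, Φ (a + b) = Φ a + Φ b) ∧
    ((∀ x y : B, (∀ t : B, x * t * y = 0) → x = 0 ∨ y = 0) →
      star (Φ 1) = Φ 1 → Φ 1 * Φ 1 = Φ 1 →
      (∀ a : A, Φ (star a) = star (Φ a)) ∧
      ((∀ a b : A, Φ (a * b) = Φ a * Φ b) ∨ (∀ a b : A, Φ (a * b) = Φ b * Φ a))) := by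
  have hη1 : 1 + η ≠ 0 := fun h => hη (by linear_combination h)
  have hν1 : 1 + ν ≠ 0 := fun h => hν (by linear_combination h)
  have hΦ' : ∀ a b c : A, Φ (mx η ν a b c) = mx η ν (Φ a) (Φ b) (Φ c) := hΦ
  have hef : e * (1-e) = 0 := by rw [mul_sub, mul_one, heidem, sub_self]
  have hfe : (1-e) * e = 0 := by rw [sub_mul, one_mul, heidem, sub_self]
  have hff : (1-e) * (1-e) = 1-e := by
    have h : (1-e)*(1-e) = 1 - e - e + e*e := by noncomm_ring
    rw [heidem] at h
    rw [h]; abel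
  have hsf : star (1-e : A) = 1-e := by rw [star_sub, star_one, hestar]
  have hefo : e + (1-e) = 1 := by abel
  have hf0 : (1-e : A) ≠ 0 := fun h => he1 (sub_eq_zero.mp h).symm
  have hone : (1:A) ≠ 0 := by
    intro h
    apply he0
    calc e = e * 1 := (mul_one e).symm
      _ = e * 0 := by rw [h]
      _ = 0 := mul_zero e
  have hadd := additive Φ η ν hbij hΦ' hη1 hν1 hν0 hprime e (1-e) hestar hsf heidem
    hff hef hfe hefo he0 hf0
  refine ⟨hadd, fun hBprime hp1 hp2 => ⟨?_, ?_⟩⟩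
  · exact star_pres Φ η ν hbij hΦ' hη1 hν1 hν0 hone hBprime hp1 hp2
  · exact herstein Φ hbij.surjective hadd hBprime
      (jordan Φ η ν hbij hΦ' hη1 hν1 hν0 hone hBprime hp1 hp2 hadd)
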